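/- Let C < ∞ and let (f_N)_{N∈ℕ} be measurable functions f_N : (−2,2) → [0,C]. Suppose g : (−2,2) → (0,∞) is continuous and strictly positive, and that for every compact interval J ⊂ (−2,2), lim_{N→∞} ∫_J f_N(E) dE = ∫_J g(E) dE. Then for almost every E ∈ (−2,2), limsup_{N→∞} f_N(E) > 0. -/

import Mathlib

open MeasureTheory Filter

/-- Let `C < ∞` and let `f_N : (-2,2) → [0,C]` be measurable. If
`g : (-2,2) → (0,∞)` is continuous and strictly positive and
`∫_J f_N(E) dE → ∫_J g(E) dE` for every compact interval `J ⊂ (-2,2)`, then for almost every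
`E ∈ (-2,2)`, `limsup_N f_N(E) > 0`. -/
theorem statement_9
    (C : ℝ) (f : ℕ → ℝ → ℝ)
    (hmeas : ∀ N, Measurable (f N))
    (hrange : ∀ N, ∀ E ∈ Set.Ioo (-2 : ℝ) 2, f N E ∈ Set.Icc (0 : ℝ) C)
    (g : ℝ → ℝ)
    (hgcont : ContinuousOn g (Set.Ioo (-2 : ℝ) 2))
    (hgpos : ∀ E ∈ Set.Ioo (-2 : ℝ) 2, 0 < g E)
    (hconv : ∀ c d : ℝ, -2 < c → c ≤ d → d < 2 →
      Tendsto (fun N => ∫ E in c..d, f N E) atTop (nhds (∫ E in c..d, g E))) :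
    ∀ᵐ E ∂(volume.restrict (Set.Ioo (-2 : ℝ) 2)),
      0 < Filter.limsup (fun N => f N E) atTop := by
  set I : Set ℝ := Set.Ioo (-2 : ℝ) 2 with hIdef
  have hI : MeasurableSet I := measurableSet_Ioo
  have hLmeas : Measurable (fun E => limsup (fun N => f N E) atTop) :=
    Measurable.limsup hmeas
  set A : Set ℝ := {E | limsup (fun N => f N E) atTop ≤ 0} ∩ I with hAdef
  have hAmeas : MeasurableSet A := (hLmeas measurableSet_Iic).inter hI
  -- pointwise convergence to 0 on A
  have htend : ∀ E ∈ A, Tendsto (fun N => f N E) atTop (nhds 0) := by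
    intro E hE
    obtain ⟨hle, hEI⟩ := hE
    have hub : ∀ N, f N E ≤ C := fun N => (hrange N E hEI).2
    have hlb : ∀ N, 0 ≤ f N E := fun N => (hrange N E hEI).1
    have hba : IsBoundedUnder (· ≤ ·) atTop (fun N => f N E) :=
      isBoundedUnder_of ⟨C, hub⟩
    have hbb : IsBoundedUnder (· ≥ ·) atTop (fun N => f N E) :=
      isBoundedUnder_of ⟨0, hlb⟩
    have h1 : (0 : ℝ) ≤ liminf (fun N => f N E) atTop :=
      le_liminf_of_le hba.isCoboundedUnder_ge (Eventually.of_forall hlb)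
    have h2 : liminf (fun N => f N E) atTop ≤ limsup (fun N => f N E) atTop :=
      liminf_le_limsup hba hbb
    have hls : limsup (fun N => f N E) atTop = 0 := le_antisymm hle (h1.trans h2)
    have hli : liminf (fun N => f N E) atTop = 0 := le_antisymm (by linarith) h1
    exact tendsto_of_liminf_eq_limsup hli hls hba hbb
  have hA0 : volume A = 0 := by
    by_contra hpos
    -- a density point of A
    have hres : (volume.restrict A) ≠ 0 := by
      simpa [Measure.restrict_eq_zero] using hpos
    have : (ae (volume.restrict A)).NeBot := ae_neBot.2 hres
    obtain ⟨x, hxd, hxA⟩ :=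
      ((Besicovitch.ae_tendsto_measure_inter_div volume A).and
        (ae_restrict_mem hAmeas)).exists
    obtain ⟨-, hxI⟩ := hxA
    have hgx : 0 < g x := hgpos x hxI
    have hC : 0 ≤ C := (hrange 0 x hxI).1.trans (hrange 0 x hxI).2
    -- continuity: find δ > 0 with ball x δ ⊆ I and g y > g x / 2 there
    have hcont : ContinuousAt g x :=
      (hgcont x hxI).continuousAt (isOpen_Ioo.mem_nhds hxI)
    obtain ⟨δ₀, hδ₀pos, hδ₀⟩ := Metric.continuousAt_iff.1 hcont (g x / 2) (by linarith)
    obtain ⟨δ₁, hδ₁pos, hδ₁⟩ := Metric.mem_nhds_iff.1 (isOpen_Ioo.mem_nhds hxI)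
    set δ := min δ₀ δ₁ with hδdef
    have hδpos : 0 < δ := lt_min hδ₀pos hδ₁pos
    have hballI : Metric.ball x δ ⊆ I :=
      (Metric.ball_subset_ball (min_le_right _ _)).trans hδ₁
    have hglb : ∀ y ∈ Metric.ball x δ, g x / 2 ≤ g y := by
      intro y hy
      have h := hδ₀ (lt_of_lt_of_le (Metric.mem_ball.1 hy) (min_le_left _ _))
      rw [Real.dist_eq] at h
      have := abs_lt.1 h
      linarith [this.1]
    set ε := min (1/2 : ℝ) (g x / (2 * (C + 1))) with hεdef
    have hεpos : 0 < ε := lt_min (by norm_num) (by positivity)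
    have hε1 : ε ≤ 1 := (min_le_left _ _).trans (by norm_num)
    have hlt : (1 : ENNReal) - ENNReal.ofReal ε < 1 :=
      ENNReal.sub_lt_self ENNReal.one_ne_top one_ne_zero
        (ENNReal.ofReal_pos.2 hεpos).ne'
    have h1' : ∀ᶠ r in nhdsWithin (0:ℝ) (Set.Ioi 0),
        1 - ENNReal.ofReal ε <
          volume (A ∩ Metric.closedBall x r) / volume (Metric.closedBall x r) :=
      hxd.eventually (eventually_gt_nhds hlt)
    have h2' : ∀ᶠ r in nhdsWithin (0:ℝ) (Set.Ioi 0), r ∈ Set.Ioo 0 δ :=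
      eventually_mem_set.2 (Ioo_mem_nhdsGT_of_mem ⟨le_refl 0, hδpos⟩)
    obtain ⟨r, hratio, hr0, hrδ⟩ := (h1'.and h2').exists
    -- the interval J
    have hIccJ : Set.Icc (x - r) (x + r) = Metric.closedBall x r :=
      (Real.closedBall_eq_Icc).symm
    have hcbball : Metric.closedBall x r ⊆ Metric.ball x δ :=
      Metric.closedBall_subset_ball hrδ
    have hIccI : Set.Icc (x - r) (x + r) ⊆ I := by
      rw [hIccJ]; exact hcbball.trans hballI
    set J : Set ℝ := Set.Ioc (x - r) (x + r) with hJdef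
    have hJIcc : J ⊆ Set.Icc (x - r) (x + r) := Set.Ioc_subset_Icc_self
    have hJI : J ⊆ I := hJIcc.trans hIccI
    have hcd : x - r ≤ x + r := by linarith
    have hc2 : -2 < x - r := (hIccI ⟨le_refl _, hcd⟩).1
    have hd2 : x + r < 2 := (hIccI ⟨hcd, le_refl _⟩).2
    have hJvol : volume J = ENNReal.ofReal (2 * r) := by
      rw [hJdef, Real.volume_Ioc]
      congr 1; ring
    have hJvolfin : volume J ≠ ⊤ := by rw [hJvol]; exact ENNReal.ofReal_ne_top
    -- integrability
    have hgint : IntegrableOn g J :=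
      ((hgcont.mono hIccI).integrableOn_Icc).mono_set hJIcc
    have hfub : ∀ N, ∀ E ∈ J, ‖f N E‖ ≤ C := by
      intro N E hE
      rcases hrange N E (hJI hE) with ⟨h1, h2⟩
      rw [Real.norm_eq_abs, abs_of_nonneg h1]; exact h2
    have hfint : ∀ N, IntegrableOn (f N) J := by
      intro N
      refine Integrable.mono' (integrableOn_const (C := C) hJvolfin)
        (hmeas N).aestronglyMeasurable ?_
      exact (ae_restrict_iff' measurableSet_Ioc).2
        (Eventually.of_forall fun E hE => hfub N E hE)
    -- lower bound for the integral of g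
    have hglow : g x / 2 * (volume J).toReal ≤ ∫ E in J, g E :=
      setIntegral_ge_of_const_le_real measurableSet_Ioc hJvolfin
        (fun y hy => hglb y (hcbball (hIccJ ▸ hJIcc hy))) hgint
    -- split the integral of f N
    have hsplit : ∀ N, ∫ E in J, f N E = (∫ E in J ∩ A, f N E) + ∫ E in J \ A, f N E :=
      fun N => (integral_inter_add_diff hAmeas (hfint N)).symm
    have hdiff : ∀ N, ∫ E in J \ A, f N E ≤ C * (volume (J \ A)).toReal := by
      intro N
      have hfinD : volume (J \ A) ≠ ⊤ :=
        ((measure_mono Set.diff_subset).trans_lt hJvolfin.lt_top).ne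
      calc ∫ E in J \ A, f N E ≤ ∫ _E in J \ A, C :=
            setIntegral_mono_on ((hfint N).mono_set Set.diff_subset)
              (integrableOn_const hfinD)
              (measurableSet_Ioc.diff hAmeas)
              (fun E hE => (hrange N E (hJI hE.1)).2)
        _ = C * (volume (J \ A)).toReal := by rw [setIntegral_const, smul_eq_mul, mul_comm, measureReal_def]
    have hJAmeas : MeasurableSet (J ∩ A) := measurableSet_Ioc.inter hAmeas
    have hDCT : Tendsto (fun N => ∫ E in J ∩ A, f N E) atTop (nhds 0) := by
      have hfinJA : volume (J ∩ A) ≠ ⊤ :=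
        ((measure_mono Set.inter_subset_left).trans_lt hJvolfin.lt_top).ne
      have := tendsto_integral_of_dominated_convergence (μ := volume.restrict (J ∩ A))
        (F := fun N E => f N E) (f := fun _ => (0:ℝ)) (fun _ => C)
        (fun N => (hmeas N).aestronglyMeasurable)
        (integrableOn_const hfinJA)
        (fun N => (ae_restrict_iff' hJAmeas).2
          (Eventually.of_forall fun E hE => hfub N E hE.1))
        ((ae_restrict_iff' hJAmeas).2
          (Eventually.of_forall fun E hE => htend E hE.2))
      simpa using this
    have hJconv : Tendsto (fun N => ∫ E in J, f N E) atTop (nhds (∫ E in J, g E)) := by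
      have := hconv (x - r) (x + r) hc2 hcd hd2
      simpa [intervalIntegral.integral_of_le hcd] using this
    have hkey : (∫ E in J, g E) ≤ 0 + C * (volume (J \ A)).toReal := by
      refine le_of_tendsto_of_tendsto' hJconv (hDCT.add tendsto_const_nhds) fun N => ?_
      rw [hsplit N]
      exact add_le_add le_rfl (hdiff N)
    -- density bound
    set cb := Metric.closedBall x r with hcbdef
    have hcbvol : volume cb = ENNReal.ofReal (2 * r) := Real.volume_closedBall x r
    have hcbne0 : volume cb ≠ 0 := by
      rw [hcbvol]; exact (ENNReal.ofReal_pos.2 (by linarith)).ne'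
    have hcbnetop : volume cb ≠ ⊤ := by rw [hcbvol]; exact ENNReal.ofReal_ne_top
    have hineq : (1 - ENNReal.ofReal ε) * volume cb ≤ volume (A ∩ cb) :=
      (ENNReal.le_div_iff_mul_le (Or.inl hcbne0) (Or.inl hcbnetop)).1 hratio.le
    have hofε1 : ENNReal.ofReal ε ≤ 1 := by
      rw [← ENNReal.ofReal_one]; exact ENNReal.ofReal_le_ofReal hε1
    have hAcbfin : volume (A ∩ cb) ≠ ⊤ :=
      ((measure_mono Set.inter_subset_right).trans_lt hcbnetop.lt_top).ne
    have hcbAfin : volume (cb \ A) ≠ ⊤ :=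
      ((measure_mono Set.diff_subset).trans_lt hcbnetop.lt_top).ne
    have htr : (1 - ε) * (2 * r) ≤ (volume (A ∩ cb)).toReal := by
      have h1 : ((1 - ENNReal.ofReal ε) * volume cb).toReal = (1 - ε) * (2 * r) := by
        rw [ENNReal.toReal_mul, hcbvol, ENNReal.toReal_ofReal (by linarith),
          ENNReal.toReal_sub_of_le hofε1 ENNReal.one_ne_top,
          ENNReal.toReal_ofReal hεpos.le, ENNReal.toReal_one]
      calc (1 - ε) * (2 * r) = ((1 - ENNReal.ofReal ε) * volume cb).toReal := h1.symm
        _ ≤ (volume (A ∩ cb)).toReal := ENNReal.toReal_mono hAcbfin hineq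
    have hsum : (volume (cb ∩ A)).toReal + (volume (cb \ A)).toReal = 2 * r := by
      rw [← ENNReal.toReal_add (by rwa [Set.inter_comm] at hAcbfin) hcbAfin,
        measure_inter_add_diff cb hAmeas, hcbvol, ENNReal.toReal_ofReal (by linarith)]
    have hdb : (volume (cb \ A)).toReal ≤ ε * (2 * r) := by
      rw [Set.inter_comm] at hsum
      linarith [htr, hsum]
    have hJAdb : (volume (J \ A)).toReal ≤ ε * (2 * r) := by
      refine le_trans (ENNReal.toReal_mono hcbAfin ?_) hdb
      exact measure_mono (Set.diff_subset_diff_left (hIccJ ▸ hJIcc))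
    -- contradiction
    have h3 : ε * (2 * (C + 1)) ≤ g x :=
      (le_div_iff₀ (by positivity)).1 (min_le_right _ _)
    have hfinal : g x / 2 * (2 * r) ≤ C * (ε * (2 * r)) := by
      have hJvolR : (volume J).toReal = 2 * r := by
        rw [hJvol, ENNReal.toReal_ofReal (by linarith)]
      calc g x / 2 * (2 * r) = g x / 2 * (volume J).toReal := by rw [hJvolR]
        _ ≤ ∫ E in J, g E := hglow
        _ ≤ 0 + C * (volume (J \ A)).toReal := hkey
        _ = C * (volume (J \ A)).toReal := by ring
        _ ≤ C * (ε * (2 * r)) := mul_le_mul_of_nonneg_left hJAdb hC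
    nlinarith [mul_le_mul_of_nonneg_right h3 hr0.le, mul_pos hεpos hr0]
  -- conclude from volume A = 0
  rw [ae_iff, Measure.restrict_apply' hI]
  have : {E | ¬ 0 < limsup (fun N => f N E) atTop} ∩ I = A := by
    ext E; simp [hAdef, not_lt]
  rw [this]; exact hA0
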